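/- Let (D_i, Γⁱ)_{i∈ℕ} be a parametrix possessing complex of pre-Hilbert A-modules, with pseudoinverses g_i and projections p_i. Then every cycle is cohomologous to its harmonic projection: for each i ≥ 1 and every b ∈ Ker D_i one has b − p_i b = D_{i-1}(g_{i-1}(D_{i-1}* b)); in particular b − p_i b ∈ Rng D_{i-1}. -/

import Mathlib

/-- A pre-Hilbert module over a unital C*-algebra `A`: a left `A`-module equipped with an
`A`-valued inner product (`A`-linear in the first argument, conjugate-symmetric, positive
definite), whose norm is the one induced by the inner product. -/
class PreHilbertModule (A : Type*) (U : Type*) [CStarAlgebra A] [PartialOrder A]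
    [StarOrderedRing A] [NormedAddCommGroup U] [Module A U] extends Inner A U where
  inner_add_left (x y z : U) : inner (x + y) z = inner x z + inner y z
  inner_smul_left (a : A) (x y : U) : inner (a • x) y = a * inner x y
  star_inner (x y : U) : star (inner x y) = inner y x
  inner_self_nonneg (x : U) : 0 ≤ inner x x
  inner_self_eq_zero (x : U) : inner x x = 0 ↔ x = 0
  norm_eq (x : U) : ‖x‖ = Real.sqrt ‖inner x x‖

section PHMHelpers

variable {A : Type*} [CStarAlgebra A] [PartialOrder A] [StarOrderedRing A]
  {U : Type*} [NormedAddCommGroup U] [Module A U] [PreHilbertModule A U]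

lemma PHM.inner_zero_left (x : U) : (inner A (0 : U) x : A) = 0 := by
  have h : (inner A ((0 : A) • (0 : U)) x : A) = 0 * inner A (0 : U) x :=
    PreHilbertModule.inner_smul_left 0 0 x
  simpa using h

lemma PHM.inner_zero_right (x : U) : (inner A x (0 : U) : A) = 0 := by
  rw [← PreHilbertModule.star_inner (0 : U) x, PHM.inner_zero_left, star_zero]

lemma PHM.inner_add_right (x y z : U) :
    (inner A x (y + z) : A) = inner A x y + inner A x z := by
  rw [← PreHilbertModule.star_inner (y + z) x, PreHilbertModule.inner_add_left,
    star_add, PreHilbertModule.star_inner, PreHilbertModule.star_inner]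

lemma PHM.inner_neg_left (x y : U) : (inner A (-x) y : A) = -(inner A x y) := by
  have h : (inner A (-x + x) y : A) = inner A (-x) y + inner A x y :=
    PreHilbertModule.inner_add_left (-x) x y
  rw [neg_add_cancel, PHM.inner_zero_left] at h
  exact eq_neg_of_add_eq_zero_left h.symm

lemma PHM.inner_sub_left (x y z : U) :
    (inner A (x - y) z : A) = inner A x z - inner A y z := by
  rw [sub_eq_add_neg, PreHilbertModule.inner_add_left, PHM.inner_neg_left, sub_eq_add_neg]

lemma PHM.inner_sub_right (x y z : U) :
    (inner A x (y - z) : A) = inner A x y - inner A x z := by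
  rw [← PreHilbertModule.star_inner (y - z) x, PHM.inner_sub_left, star_sub,
    PreHilbertModule.star_inner, PreHilbertModule.star_inner]

lemma PHM.add_eq_zero {a b : A} (ha : 0 ≤ a) (hb : 0 ≤ b) (h : a + b = 0) :
    a = 0 ∧ b = 0 := by
  have h1 : a ≤ a + b := le_add_of_nonneg_right hb
  have h2 : b ≤ a + b := le_add_of_nonneg_left ha
  rw [h] at h1 h2
  exact ⟨le_antisymm h1 ha, le_antisymm h2 hb⟩

end PHMHelpers

/-- in a parametrix possessing complex of pre-Hilbert `A`-modules, every cycle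
is cohomologous to its harmonic projection: for each `i ≥ 1` and every `b ∈ Ker D_i`,
`b - p_i b = D_{i-1} (g_{i-1} (D_{i-1}* b))`; in particular `b - p_i b ∈ Rng D_{i-1}`. -/
theorem cycle_cohomologous_to_harmonic_projection
    {A : Type*} [CStarAlgebra A] [PartialOrder A] [StarOrderedRing A]
    {Γ : ℕ → Type*} [∀ i, NormedAddCommGroup (Γ i)] [∀ i, Module A (Γ i)]
    [∀ i, PreHilbertModule A (Γ i)]
    (D : ∀ i, Γ i →L[A] Γ (i + 1)) (Dstar : ∀ i, Γ (i + 1) →L[A] Γ i)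
    (hadj : ∀ i (u : Γ i) (v : Γ (i + 1)), (inner A (D i u) v : A) = inner A u (Dstar i v))
    (hcomplex : ∀ i, (D (i + 1)).comp (D i) = 0)
    -- the associated Laplacians (with `D_{-1} := 0`)
    (Δ : ∀ i, Γ i →L[A] Γ i)
    (hΔ0 : Δ 0 = (Dstar 0).comp (D 0))
    (hΔ : ∀ i, Δ (i + 1) = (D i).comp (Dstar i) + (Dstar (i + 1)).comp (D (i + 1)))
    -- the complex is parametrix possessing
    (g p : ∀ i, Γ i →L[A] Γ i)
    (ha : ∀ i, ContinuousLinearMap.id A (Γ i) = (g i).comp (Δ i) + p i)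
    (hb : ∀ i, ContinuousLinearMap.id A (Γ i) = (Δ i).comp (g i) + p i)
    (hc : ∀ i, (Δ i).comp (p i) = 0) :
    ∀ i (b : Γ (i + 1)), D (i + 1) b = 0 →
      b - p (i + 1) b = D i (g i (Dstar i b)) ∧ b - p (i + 1) b ∈ LinearMap.range (D i : Γ i →ₗ[A] Γ (i + 1)) := by
  -- harmonicity: at positive degrees, `Δ x = 0` implies `D x = 0` and `Dstar x = 0`
  have harmonic : ∀ i (x : Γ (i + 1)), Δ (i + 1) x = 0 →
      D (i + 1) x = 0 ∧ Dstar i x = 0 := by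
    intro i x hx
    have e1 : (inner A x (Δ (i + 1) x) : A)
        = inner A (Dstar i x) (Dstar i x) + inner A (D (i + 1) x) (D (i + 1) x) := by
      rw [hΔ]
      simp only [ContinuousLinearMap.add_apply, ContinuousLinearMap.comp_apply]
      rw [PHM.inner_add_right]
      congr 1
      · rw [← PreHilbertModule.star_inner (D i (Dstar i x)) x, hadj,
          PreHilbertModule.star_inner]
      · exact (hadj (i + 1) x (D (i + 1) x)).symm
    rw [hx, PHM.inner_zero_right] at e1
    obtain ⟨h1, h2⟩ := PHM.add_eq_zero (PreHilbertModule.inner_self_nonneg _)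
      (PreHilbertModule.inner_self_nonneg _) e1.symm
    exact ⟨(PreHilbertModule.inner_self_eq_zero _).mp h2,
      (PreHilbertModule.inner_self_eq_zero _).mp h1⟩
  -- at any degree, `Δ x = 0` implies `D x = 0`
  have harmonicD : ∀ i (x : Γ i), Δ i x = 0 → D i x = 0 := by
    intro i
    match i with
    | 0 =>
      intro x hx
      have e1 : (inner A (D 0 x) (D 0 x) : A) = inner A x (Δ 0 x) := by
        rw [hΔ0, ContinuousLinearMap.comp_apply, hadj]
      rw [hx, PHM.inner_zero_right] at e1
      exact (PreHilbertModule.inner_self_eq_zero _).mp e1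
    | i + 1 =>
      intro x hx
      exact (harmonic i x hx).1
  -- commutation of the Laplacian with `D`
  have comm : ∀ i (x : Γ i), Δ (i + 1) (D i x) = D i (Δ i x) := by
    intro i x
    have hDD : ∀ j (y : Γ j), D (j + 1) (D j y) = 0 := by
      intro j y
      have := ContinuousLinearMap.ext_iff.mp (hcomplex j) y
      simpa using this
    match i with
    | 0 =>
      rw [hΔ 0, hΔ0]
      simp only [ContinuousLinearMap.add_apply, ContinuousLinearMap.comp_apply]
      rw [hDD 0 x]
      simp
    | i + 1 =>
      rw [hΔ (i + 1), hΔ i]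
      simp only [ContinuousLinearMap.add_apply, ContinuousLinearMap.comp_apply]
      rw [hDD (i + 1) x, map_add, hDD i (Dstar i x)]
      simp
  intro i b hbD
  set w : Γ i := Dstar i b with hw
  set y : Γ i := g i w with hy
  set h : Γ (i + 1) := b - p (i + 1) b - D i y with hh
  -- Δ b = D w
  have sΔb : Δ (i + 1) b = D i w := by
    rw [hΔ i]
    simp only [ContinuousLinearMap.add_apply, ContinuousLinearMap.comp_apply]
    rw [hbD]
    simp [hw]
  -- Δ (p b) = 0
  have sΔpb : Δ (i + 1) (p (i + 1) b) = 0 := by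
    have := ContinuousLinearMap.ext_iff.mp (hc (i + 1)) b
    simpa using this
  -- Δ y = w - p w
  have sΔy : Δ i y = w - p i w := by
    have := ContinuousLinearMap.ext_iff.mp (hb i) w
    simp only [ContinuousLinearMap.id_apply, ContinuousLinearMap.add_apply,
      ContinuousLinearMap.comp_apply] at this
    rw [hy]
    exact eq_sub_of_add_eq this.symm
  -- D (p w) = 0
  have sDpw : D i (p i w) = 0 := by
    apply harmonicD
    have := ContinuousLinearMap.ext_iff.mp (hc i) w
    simpa using this
  -- Δ h = 0
  have sΔh : Δ (i + 1) h = 0 := by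
    rw [hh, map_sub, map_sub, sΔpb, comm i y, sΔy, map_sub, sΔb, sDpw]
    abel
  obtain ⟨hDh, hDsh⟩ := harmonic i h sΔh
  -- b - p b = Δ (g b)
  have sbpb : b - p (i + 1) b = Δ (i + 1) (g (i + 1) b) := by
    have := ContinuousLinearMap.ext_iff.mp (hb (i + 1)) b
    simp only [ContinuousLinearMap.id_apply, ContinuousLinearMap.add_apply,
      ContinuousLinearMap.comp_apply] at this
    exact sub_eq_of_eq_add this
  -- ⟨h, h⟩ = 0
  have key : (inner A h h : A) = 0 := by
    have hexp : h = D i (Dstar i (g (i + 1) b)) + Dstar (i + 1) (D (i + 1) (g (i + 1) b))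
        - D i y := by
      rw [hh, sbpb, hΔ i]
      simp only [ContinuousLinearMap.add_apply, ContinuousLinearMap.comp_apply]
    calc (inner A h h : A)
        = inner A (D i (Dstar i (g (i + 1) b))) h
          + inner A (Dstar (i + 1) (D (i + 1) (g (i + 1) b))) h - inner A (D i y) h := by
          nth_rewrite 1 [hexp]
          rw [PHM.inner_sub_left, PreHilbertModule.inner_add_left]
      _ = 0 := by
          rw [hadj i _ h, hDsh, PHM.inner_zero_right]
          rw [hadj i y h, hDsh, PHM.inner_zero_right]
          rw [← PreHilbertModule.star_inner h (Dstar (i + 1) (D (i + 1) (g (i + 1) b))),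
            ← hadj (i + 1) h _, hDh, PHM.inner_zero_left, star_zero]
          simp
  have hzero : h = 0 := (PreHilbertModule.inner_self_eq_zero h).mp key
  have main : b - p (i + 1) b = D i (g i (Dstar i b)) := by
    have := sub_eq_zero.mp (by rw [← hh]; exact hzero)
    simpa [hy, hw] using this
  exact ⟨main, main ▸ ⟨g i (Dstar i b), rfl⟩⟩
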